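/- Fix r > 0 and S ≥ 0. For every a, b ∈ ℝ with a < b, every positive continuous function ρ on [a,b] belonging to H¹(a,b), and every continuous function v on [a,b] with ∫_a^b ρ(x)dx = 1 and V(a,b,ρ,v) ≤ S, the following two estimates hold: (i) |G(ρ(x)) − G(ρ(y))| ≤ (2/√r)·S for all x, y ∈ [a,b]; (ii) k²(ρ(a)) ≤ 4(1 + r^{-1})S. -/

import Mathlib

open MeasureTheory Set Filter

/-- `Q(ρ) = ρ ∫_{ρ*}^{ρ} P(τ)/τ² dτ − (P(ρ*)/ρ*)ρ + P(ρ*)`. -/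
noncomputable def Qf (P : ℝ → ℝ) (ρs x : ℝ) : ℝ :=
  x * (∫ τ in ρs..x, P τ / τ ^ 2) - (P ρs / ρs) * x + P ρs

/-- `k(ρ) = ∫_{ρ*}^{ρ} μ(τ)/τ dτ`. -/
noncomputable def kf (μ : ℝ → ℝ) (ρs x : ℝ) : ℝ :=
  ∫ τ in ρs..x, μ τ / τ

/-- `G(ρ) = ∫_{ρ*}^{ρ} μ(l) l^{-3/2} √(Q(l)) dl`. -/
noncomputable def Gf (P μ : ℝ → ℝ) (ρs x : ℝ) : ℝ :=
  ∫ l in ρs..x, μ l / l ^ ((3 : ℝ) / 2) * Real.sqrt (Qf P ρs l)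

/-- Assumption (H): `G(ρ) → +∞` as `ρ → +∞`, `G(ρ) → −∞` as `ρ → 0⁺`,
and `k(ρ) → +∞` as `ρ → +∞`. -/
def AssumpH (P μ : ℝ → ℝ) (ρs : ℝ) : Prop :=
  Tendsto (Gf P μ ρs) atTop atTop ∧
  Tendsto (Gf P μ ρs) (nhdsWithin 0 (Ioi 0)) atBot ∧
  Tendsto (kf μ ρs) atTop atTop

/-- Potential energy `U(a,b,ρ) = ∫_a^b Q(ρ(x)) dx`. -/
noncomputable def Uf (P : ℝ → ℝ) (ρs a b : ℝ) (ρ : ℝ → ℝ) : ℝ :=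
  ∫ x in a..b, Qf P ρs (ρ x)

/-- Total mechanical energy `E`. -/
noncomputable def Ef (P : ℝ → ℝ) (ρs a b : ℝ) (ρ v : ℝ → ℝ) : ℝ :=
  (v a) ^ 2 / 2 + (v b) ^ 2 / 2 + (1 / 2) * (∫ x in a..b, ρ x * (v x) ^ 2)
    + Uf P ρs a b ρ

/-- Transformed energy `W`. -/
noncomputable def Wf (P μ : ℝ → ℝ) (ρs a b : ℝ) (ρ ρx v : ℝ → ℝ) : ℝ :=
  (1 / 2) * (∫ x in a..b, (ρ x)⁻¹ * (ρ x * v x + μ (ρ x) * (ρ x)⁻¹ * ρx x) ^ 2)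
    + (1 / 2) * (v b - kf μ ρs (ρ b)) ^ 2
    + (1 / 2) * (v a + kf μ ρs (ρ a)) ^ 2
    + Uf P ρs a b ρ

/-- Control Lyapunov functional `V = W + r E`. -/
noncomputable def Vf (P μ : ℝ → ℝ) (ρs r a b : ℝ) (ρ ρx v : ℝ → ℝ) : ℝ :=
  Wf P μ ρs a b ρ ρx v + r * Ef P ρs a b ρ v

/-- `f ∈ H¹(a,b)` with weak derivative `f'`:  `f' ∈ L¹ ∩ L²(a,b)` and
`f(x) = f(a) + ∫_a^x f'(s) ds` on `[a,b]`. -/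
def H1On (a b : ℝ) (f f' : ℝ → ℝ) : Prop :=
  IntervalIntegrable f' volume a b ∧
  IntervalIntegrable (fun s => (f' s) ^ 2) volume a b ∧
  ∀ x ∈ Icc a b, f x = f a + ∫ s in a..x, f' s


/-- Cauchy–Schwarz inequality for interval integrals. -/
lemma cs_interval {a b : ℝ} (hab : a ≤ b) {f g : ℝ → ℝ}
    (hfg : IntervalIntegrable (fun x => f x * g x) volume a b)
    (hf2 : IntervalIntegrable (fun x => f x ^ 2) volume a b)
    (hg2 : IntervalIntegrable (fun x => g x ^ 2) volume a b) :
    (∫ x in a..b, f x * g x) ^ 2 ≤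
      (∫ x in a..b, f x ^ 2) * (∫ x in a..b, g x ^ 2) := by
  set I := ∫ x in a..b, f x ^ 2 with hI
  set J := ∫ x in a..b, g x ^ 2 with hJ
  set K := ∫ x in a..b, f x * g x with hK
  have key : ∀ t : ℝ, 0 ≤ I * (t * t) + (2 * K) * t + J := by
    intro t
    have h0 : 0 ≤ ∫ x in a..b, (t * f x + g x) ^ 2 :=
      intervalIntegral.integral_nonneg hab (fun u _ => sq_nonneg _)
    have hexp : (∫ x in a..b, (t * f x + g x) ^ 2)
        = (t * t) * I + (2 * t) * K + J := by
      have h1 : (∫ x in a..b, (t * f x + g x) ^ 2)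
          = ∫ x in a..b, ((t * t) * f x ^ 2 + ((2 * t) * (f x * g x) + g x ^ 2)) := by
        apply intervalIntegral.integral_congr
        intro x _
        ring
      rw [h1, intervalIntegral.integral_add ((hf2.const_mul _))
          ((hfg.const_mul _).add hg2),
        intervalIntegral.integral_add (hfg.const_mul _) hg2,
        intervalIntegral.integral_const_mul, intervalIntegral.integral_const_mul]
      ring
    nlinarith [h0, hexp]
  have hd := discrim_le_zero key
  rw [discrim] at hd
  nlinarith [hd]

variable {P : ℝ → ℝ} {ρs : ℝ}

/-- The integrand `P τ / τ²` is continuous on `(0, ∞)`. -/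
lemma integrand_contOn (hPc : ContinuousOn P (Ioi 0)) :
    ContinuousOn (fun τ : ℝ => P τ / τ ^ 2) (Ioi 0) := by
  apply hPc.div (continuousOn_pow 2)
  intro x hx
  have hx' : 0 < x := hx
  positivity

lemma integrand_intI (hPc : ContinuousOn P (Ioi 0)) {y z : ℝ} (hy : 0 < y) (hz : 0 < z) :
    IntervalIntegrable (fun τ : ℝ => P τ / τ ^ 2) volume y z := by
  apply ContinuousOn.intervalIntegrable
  apply (integrand_contOn hPc).mono
  intro t ht
  have := ht.1
  have h := lt_min hy hz
  exact lt_of_lt_of_le h (by simpa [uIcc] using this)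

/-- `Q` is nonnegative on `(0,∞)`. -/
lemma Qf_nonneg' (hPc : ContinuousOn P (Ioi 0)) (hPmono : StrictMonoOn P (Ioi 0))
    (hρs : 0 < ρs) {x : ℝ} (hx : 0 < x) :
    0 ≤ x * (∫ τ in ρs..x, P τ / τ ^ 2) - (P ρs / ρs) * x + P ρs := by
  have hPm := hPmono.monotoneOn
  have hint1 : IntervalIntegrable (fun τ : ℝ => P τ / τ ^ 2) volume ρs x :=
    integrand_intI hPc hρs hx
  have hint2 : IntervalIntegrable (fun τ : ℝ => P ρs / τ ^ 2) volume ρs x :=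
    integrand_intI (P := fun _ => P ρs) continuousOn_const hρs hx
  have hzero : (0:ℝ) ∉ uIcc ρs x := by
    intro h0
    have := (lt_min hρs hx).trans_le (by simpa [uIcc] using h0.1)
    exact lt_irrefl _ this
  have hconst : (∫ τ in ρs..x, P ρs / τ ^ 2) = P ρs * (ρs⁻¹ - x⁻¹) := by
    have h1 : (∫ τ in ρs..x, P ρs / τ ^ 2) = P ρs * ∫ τ in ρs..x, (τ:ℝ) ^ (-2 : ℤ) := by
      rw [← intervalIntegral.integral_const_mul]
      apply intervalIntegral.integral_congr
      intro t ht
      show P ρs / t ^ 2 = P ρs * t ^ (-2 : ℤ)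
      rw [zpow_neg, div_eq_mul_inv]
      norm_num
    rw [h1, integral_zpow (Or.inr ⟨by norm_num, hzero⟩)]
    have : ((-2 : ℤ) + 1) = -1 := by norm_num
    rw [this]
    simp only [zpow_neg, zpow_one]
    push_cast
    ring
  have hsplit : (∫ τ in ρs..x, (P τ - P ρs) / τ ^ 2)
      = (∫ τ in ρs..x, P τ / τ ^ 2) - ∫ τ in ρs..x, P ρs / τ ^ 2 := by
    rw [← intervalIntegral.integral_sub hint1 hint2]
    apply intervalIntegral.integral_congr
    intro t _
    show (P t - P ρs) / t ^ 2 = P t / t ^ 2 - P ρs / t ^ 2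
    rw [sub_div]
  have hD : 0 ≤ ∫ τ in ρs..x, (P τ - P ρs) / τ ^ 2 := by
    rcases le_or_gt ρs x with h | h
    · apply intervalIntegral.integral_nonneg h
      intro u hu
      have hu0 : 0 < u := lt_of_lt_of_le hρs hu.1
      have : P ρs ≤ P u := hPm hρs hu0 hu.1
      exact div_nonneg (by linarith) (by positivity)
    · rw [intervalIntegral.integral_symm x ρs]
      have hneg : 0 ≤ ∫ τ in x..ρs, -((P τ - P ρs) / τ ^ 2) := by
        apply intervalIntegral.integral_nonneg h.le
        intro u hu
        have hu0 : 0 < u := lt_of_lt_of_le hx hu.1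
        have : P u ≤ P ρs := hPm hu0 hρs hu.2
        have h2 : (0:ℝ) < u ^ 2 := by positivity
        have := div_nonpos_of_nonpos_of_nonneg (by linarith : P u - P ρs ≤ 0) h2.le
        linarith
      rw [intervalIntegral.integral_neg] at hneg
      linarith
  have key : x * (∫ τ in ρs..x, P τ / τ ^ 2) - (P ρs / ρs) * x + P ρs
      = x * ∫ τ in ρs..x, (P τ - P ρs) / τ ^ 2 := by
    rw [hsplit, hconst]
    have hxne : x ≠ 0 := ne_of_gt hx
    have hρne : ρs ≠ 0 := ne_of_gt hρs
    field_simp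
    ring
  rw [key]
  positivity


/-- Chain rule / change of variables: if `w t = w a + ∫_a^t u` with `u ∈ L¹(a,x)` and `g`
is continuous, then `∫_{w a}^{w x} g = ∫_a^x g(w s) u s ds`. -/
lemma comp_primitive {g : ℝ → ℝ} (hg : Continuous g) {a x : ℝ} (hax : a ≤ x)
    {w u : ℝ → ℝ} (hu : IntervalIntegrable u volume a x)
    (hw : ∀ t ∈ Icc a x, w t = w a + ∫ s in a..t, u s) :
    (∫ l in (w a)..(w x), g l) = ∫ s in a..x, g (w s) * u s := by
  have hxmem : x ∈ Icc a x := ⟨hax, le_rfl⟩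
  have hamem : a ∈ Icc a x := ⟨le_rfl, hax⟩
  have huIcc : IntegrableOn u (Icc a x) volume :=
    (intervalIntegrable_iff_integrableOn_Icc_of_le hax).1 hu
  have hIccuIcc : uIcc a x = Icc a x := uIcc_of_le hax
  -- continuity of `w` on `[a, x]`
  have hwc : ContinuousOn w (Icc a x) := by
    have h1 : ContinuousOn (fun t => w a + ∫ s in a..t, u s) (Icc a x) := by
      apply continuousOn_const.add
      have := intervalIntegral.continuousOn_primitive_interval
        (μ := volume) (a := a) (b := x) (f := u) (by rwa [hIccuIcc])
      rwa [hIccuIcc] at this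
    exact h1.congr hw
  -- bound on `w`
  obtain ⟨C, hC⟩ := isCompact_Icc.exists_bound_of_continuousOn hwc
  have hC0 : 0 ≤ C := le_trans (norm_nonneg _) (hC a hamem)
  set K : Set ℝ := Icc (-(C + 1)) (C + 1) with hK
  have h0K : (0:ℝ) ∈ K := by rw [hK, mem_Icc]; constructor <;> linarith
  -- bound on `g` over `K`
  obtain ⟨C1, hC1⟩ := isCompact_Icc.exists_bound_of_continuousOn
    (hg.continuousOn (s := K))
  have hC10 : 0 ≤ C1 := le_trans (norm_nonneg _) (hC1 0 h0K)
  -- uniform continuity of `g` on `K`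
  have hgu := isCompact_Icc.uniformContinuousOn_of_continuous
    (hg.continuousOn (s := K))
  rw [Metric.uniformContinuousOn_iff] at hgu
  set Nu : ℝ := ∫ s in a..x, |u s| with hNu
  have hNu0 : 0 ≤ Nu :=
    intervalIntegral.integral_nonneg hax (fun s _ => abs_nonneg _)
  -- suffices to bound the difference by every `ε > 0`
  set LHS : ℝ := ∫ l in (w a)..(w x), g l with hLHS
  set RHS : ℝ := ∫ s in a..x, g (w s) * u s with hRHS
  suffices h : ∀ ε : ℝ, 0 < ε → |LHS - RHS| ≤ ε by
    have hd : |LHS - RHS| ≤ 0 := by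
      by_contra hcon
      push_neg at hcon
      have := h (|LHS - RHS| / 2) (by linarith)
      linarith
    have := abs_nonpos_iff.1 hd
    linarith [sub_eq_zero.1 this]
  intro ε hε
  set εg : ℝ := ε / (2 * (Nu + 1)) with hεg
  have hεgpos : 0 < εg := by positivity
  obtain ⟨δ', hδ'pos, hδ'⟩ := hgu εg hεgpos
  set δ : ℝ := min (min 1 (δ' / 2)) (ε / (4 * (C1 + 1))) with hδ
  have hδpos : 0 < δ := by
    apply lt_min (lt_min one_pos (by linarith))
    positivity
  have hδ1 : δ ≤ 1 := le_trans (min_le_left _ _) (min_le_left _ _)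
  have hδδ' : δ < δ' := lt_of_le_of_lt (le_trans (min_le_left _ _) (min_le_right _ _))
    (by linarith)
  have hδε : δ ≤ ε / (4 * (C1 + 1)) := min_le_right _ _
  -- approximate `u` by a continuous function in `L¹`
  set ub : ℝ → ℝ := (Icc a x).indicator u with hub
  have hubint : Integrable ub volume := (integrable_indicator_iff measurableSet_Icc).2 huIcc
  obtain ⟨φ, -, hφnorm, hφcont, hφmem⟩ :=
    (memLp_one_iff_integrable.2 hubint).exists_hasCompactSupport_eLpNorm_sub_le
      ENNReal.one_ne_top (ε := ENNReal.ofReal δ) (ENNReal.ofReal_pos.2 hδpos).ne'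
  have hφint : Integrable φ volume := memLp_one_iff_integrable.1 hφmem
  -- `L¹` distance in real terms
  have hdist : (∫ s, |ub s - φ s|) ≤ δ := by
    have h2 : Integrable (ub - φ) volume := hubint.sub hφint
    have e1 : (∫ s, |ub s - φ s|) = ∫ s, ‖(ub - φ) s‖ := by
      simp [Real.norm_eq_abs]
    have e2 : (∫ s, ‖(ub - φ) s‖) = (eLpNorm (ub - φ) 1 volume).toReal := by
      rw [integral_norm_eq_lintegral_enorm h2.1, eLpNorm_one_eq_lintegral_enorm]
    rw [e1, e2]
    exact ENNReal.toReal_le_of_le_ofReal hδpos.le hφnorm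
  have habs : Integrable (fun s => |ub s - φ s|) volume := (hubint.sub hφint).abs
  have hsubδ : ∀ t₁ t₂ : ℝ, t₁ ≤ t₂ → (∫ s in t₁..t₂, |ub s - φ s|) ≤ δ := by
    intro t₁ t₂ h12
    rw [intervalIntegral.integral_of_le h12]
    calc (∫ s in Ioc t₁ t₂, |ub s - φ s|) ≤ ∫ s, |ub s - φ s| :=
          setIntegral_le_integral habs (Eventually.of_forall fun s => abs_nonneg _)
      _ ≤ δ := hdist
  -- the approximate primitive
  set wφ : ℝ → ℝ := fun t => w a + ∫ s in a..t, φ s with hwφ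
  have hwφd : ∀ t : ℝ, HasDerivAt wφ (φ t) t := by
    intro t
    exact (intervalIntegral.integral_hasDerivAt_right
      (hφcont.intervalIntegrable a t) ⟨Set.univ, Filter.univ_mem, hφcont.aestronglyMeasurable⟩
      hφcont.continuousAt).const_add (w a)
  have hwφcont : Continuous wφ := by
    rw [continuous_iff_continuousAt]; exact fun t => (hwφd t).continuousAt
  have hwφa : wφ a = w a := by simp [hwφ]
  -- `G` primitive of `g`
  set G : ℝ → ℝ := fun y => ∫ l in (w a)..y, g l with hG
  have hGd : ∀ y : ℝ, HasDerivAt G (g y) y := fun y =>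
    intervalIntegral.integral_hasDerivAt_right (hg.intervalIntegrable _ _)
      ⟨Set.univ, Filter.univ_mem, hg.aestronglyMeasurable⟩ hg.continuousAt
  have hFTC : (∫ s in a..x, g (wφ s) * φ s) = G (wφ x) := by
    have := intervalIntegral.integral_eq_sub_of_hasDerivAt
      (f := fun t => G (wφ t)) (f' := fun t => g (wφ t) * φ t)
      (fun t _ => (hGd (wφ t)).comp t (hwφd t))
      (((hg.comp hwφcont).mul hφcont).intervalIntegrable a x)
    rw [this]
    show G (wφ x) - G (wφ a) = G (wφ x)
    rw [hwφa]
    simp [hG]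
  -- closeness of `wφ` to `w`
  have hclose : ∀ t ∈ Icc a x, |wφ t - w t| ≤ δ := by
    intro t ht
    have h2 : (∫ s in a..t, u s) = ∫ s in a..t, ub s := by
      apply intervalIntegral.integral_congr
      intro s hs
      rw [uIcc_of_le ht.1] at hs
      have hs' : s ∈ Icc a x := ⟨hs.1, hs.2.trans ht.2⟩
      simp [hub, indicator_of_mem hs']
    have h3 : wφ t - w t = ∫ s in a..t, (φ s - ub s) := by
      rw [hw t ht, h2, intervalIntegral.integral_sub (hφcont.intervalIntegrable a t)
        hubint.intervalIntegrable]
      simp [hwφ]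
    rw [h3]
    calc |∫ s in a..t, (φ s - ub s)| ≤ ∫ s in a..t, |φ s - ub s| := by
          simpa [Real.norm_eq_abs] using
            intervalIntegral.norm_integral_le_integral_norm (μ := volume)
              (f := fun s => φ s - ub s) ht.1
      _ = ∫ s in a..t, |ub s - φ s| := by
          apply intervalIntegral.integral_congr; intro s _
          show |φ s - ub s| = |ub s - φ s|
          rw [abs_sub_comm]
      _ ≤ δ := hsubδ a t ht.1
  have hwK : ∀ t ∈ Icc a x, w t ∈ K := by
    intro t ht
    have := hC t ht
    rw [Real.norm_eq_abs, abs_le] at this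
    exact ⟨by linarith [this.1], by linarith [this.2]⟩
  have hwφK : ∀ t ∈ Icc a x, wφ t ∈ K := by
    intro t ht
    have h1 := hclose t ht
    have h2 := hC t ht
    rw [Real.norm_eq_abs, abs_le] at h2
    rw [abs_le] at h1
    exact ⟨by linarith [h1.1, h2.1], by linarith [h1.2, h2.2]⟩
  -- term A : `|LHS - G (wφ x)| ≤ C1 * δ`
  have htermA : |LHS - G (wφ x)| ≤ C1 * δ := by
    have hsub : LHS - G (wφ x) = ∫ l in (wφ x)..(w x), g l := by
      rw [hLHS, hG]
      exact intervalIntegral.integral_interval_sub_left (hg.intervalIntegrable _ _)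
        (hg.intervalIntegrable _ _)
    rw [hsub]
    have hmem : ∀ y ∈ Set.uIoc (wφ x) (w x), ‖g y‖ ≤ C1 := by
      intro y hy
      apply hC1
      have h1 := hwK x hxmem
      have h2 := hwφK x hxmem
      have hy1 : min (wφ x) (w x) ≤ y := le_of_lt hy.1
      have hy2 : y ≤ max (wφ x) (w x) := hy.2
      constructor
      · calc -(C+1) ≤ min (wφ x) (w x) := le_min h2.1 h1.1
          _ ≤ y := hy1
      · calc y ≤ max (wφ x) (w x) := hy2
          _ ≤ C + 1 := max_le h2.2 h1.2
    have := intervalIntegral.norm_integral_le_of_norm_le_const hmem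
    rw [Real.norm_eq_abs] at this
    calc |∫ l in (wφ x)..(w x), g l| ≤ C1 * |w x - wφ x| := this
      _ ≤ C1 * δ := by
          apply mul_le_mul_of_nonneg_left _ hC10
          rw [abs_sub_comm]
          exact hclose x hxmem
  -- term B : `|G (wφ x) - RHS| ≤ C1 * δ + εg * Nu`
  have htermB : |G (wφ x) - RHS| ≤ C1 * δ + εg * Nu := by
    rw [← hFTC]
    have hint1 : IntervalIntegrable (fun s => g (wφ s) * φ s) volume a x :=
      ((hg.comp hwφcont).mul hφcont).intervalIntegrable a x
    have hint2 : IntervalIntegrable (fun s => g (w s) * u s) volume a x := by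
      apply hu.continuousOn_mul
      rw [hIccuIcc]
      exact hg.comp_continuousOn hwc
    have hφu : IntervalIntegrable (fun s => |φ s - u s|) volume a x :=
      ((hφcont.intervalIntegrable a x).sub hu).abs
    have huabs : IntervalIntegrable (fun s => |u s|) volume a x := hu.abs
    have hptwise : ∀ s ∈ Icc a x,
        |g (wφ s) * φ s - g (w s) * u s| ≤ C1 * |φ s - u s| + εg * |u s| := by
      intro s hs
      have hb1 : |g (wφ s)| ≤ C1 := by
        have := hC1 (wφ s) (hwφK s hs); rwa [Real.norm_eq_abs] at this
      have hb2 : |g (wφ s) - g (w s)| ≤ εg := by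
        have hdlt : dist (wφ s) (w s) < δ' := by
          rw [Real.dist_eq]
          exact lt_of_le_of_lt (hclose s hs) hδδ'
        have := hδ' (wφ s) (hwφK s hs) (w s) (hwK s hs) hdlt
        rw [Real.dist_eq] at this
        exact this.le
      calc |g (wφ s) * φ s - g (w s) * u s|
          = |g (wφ s) * (φ s - u s) + (g (wφ s) - g (w s)) * u s| := by ring_nf
        _ ≤ |g (wφ s) * (φ s - u s)| + |(g (wφ s) - g (w s)) * u s| := abs_add_le _ _
        _ = |g (wφ s)| * |φ s - u s| + |g (wφ s) - g (w s)| * |u s| := by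
            rw [abs_mul, abs_mul]
        _ ≤ C1 * |φ s - u s| + εg * |u s| := by
            apply add_le_add
            · exact mul_le_mul_of_nonneg_right hb1 (abs_nonneg _)
            · exact mul_le_mul_of_nonneg_right hb2 (abs_nonneg _)
    calc |(∫ s in a..x, g (wφ s) * φ s) - ∫ s in a..x, g (w s) * u s|
        = |∫ s in a..x, (g (wφ s) * φ s - g (w s) * u s)| := by
          rw [intervalIntegral.integral_sub hint1 hint2]
      _ ≤ ∫ s in a..x, |g (wφ s) * φ s - g (w s) * u s| := by
          simpa [Real.norm_eq_abs] using
            intervalIntegral.norm_integral_le_integral_norm (μ := volume)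
              (f := fun s => g (wφ s) * φ s - g (w s) * u s) hax
      _ ≤ ∫ s in a..x, (C1 * |φ s - u s| + εg * |u s|) := by
          apply intervalIntegral.integral_mono_on hax ((hint1.sub hint2).abs)
            ((hφu.const_mul _).add (huabs.const_mul _)) hptwise
      _ = C1 * (∫ s in a..x, |φ s - u s|) + εg * Nu := by
          rw [intervalIntegral.integral_add (hφu.const_mul _) (huabs.const_mul _),
            intervalIntegral.integral_const_mul, intervalIntegral.integral_const_mul]
      _ ≤ C1 * δ + εg * Nu := by
          apply add_le_add_left
          apply mul_le_mul_of_nonneg_left _ hC10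
          calc (∫ s in a..x, |φ s - u s|) = ∫ s in a..x, |ub s - φ s| := by
                apply intervalIntegral.integral_congr
                intro s hs
                rw [hIccuIcc] at hs
                show |φ s - u s| = |ub s - φ s|
                rw [hub, indicator_of_mem hs, abs_sub_comm]
            _ ≤ δ := hsubδ a x hax
  -- put everything together
  have htotal : |LHS - RHS| ≤ 2 * (C1 * δ) + εg * Nu := by
    calc |LHS - RHS| ≤ |LHS - G (wφ x)| + |G (wφ x) - RHS| := abs_sub_le _ _ _
      _ ≤ C1 * δ + (C1 * δ + εg * Nu) := add_le_add htermA htermB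
      _ = 2 * (C1 * δ) + εg * Nu := by ring
  have h1 : 2 * (C1 * δ) ≤ ε / 2 := by
    have hh : C1 * δ ≤ C1 * (ε / (4 * (C1 + 1))) := mul_le_mul_of_nonneg_left hδε hC10
    have h2' : C1 * (ε / (4 * (C1 + 1))) ≤ ε / 4 := by
      rw [mul_div_assoc']
      rw [div_le_div_iff₀ (by positivity) (by norm_num)]
      nlinarith [hε.le, hC10]
    linarith
  have h2 : εg * Nu ≤ ε / 2 := by
    rw [hεg]
    rw [div_mul_eq_mul_div, div_le_iff₀ (by positivity : (0:ℝ) < 2 * (Nu + 1))]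
    nlinarith [hε.le, hNu0]
  linarith

section A

variable {P μ : ℝ → ℝ} {ρs : ℝ}

lemma Qf_contOn (hPc : ContinuousOn P (Ioi 0)) (hρs : 0 < ρs) :
    ContinuousOn (fun x => Qf P ρs x) (Ioi 0) := by
  have hprim : ContinuousOn (fun x => ∫ τ in ρs..x, P τ / τ ^ 2) (Ioi 0) := by
    intro x0 hx0
    have hd : HasDerivAt (fun x => ∫ τ in ρs..x, P τ / τ ^ 2) (P x0 / x0 ^ 2) x0 :=
      intervalIntegral.integral_hasDerivAt_right (integrand_intI hPc hρs hx0)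
        ((integrand_contOn hPc).stronglyMeasurableAtFilter isOpen_Ioi x0 hx0)
        ((integrand_contOn hPc).continuousAt (isOpen_Ioi.mem_nhds hx0))
    exact hd.continuousAt.continuousWithinAt
  unfold Qf
  exact ((continuousOn_id.mul hprim).sub (continuousOn_const.mul continuousOn_id)).add
    continuousOn_const

lemma gbase_contOn (hPc : ContinuousOn P (Ioi 0)) (hμc : ContinuousOn μ (Ioi 0)) (hρs : 0 < ρs) :
    ContinuousOn (fun l => μ l / l ^ ((3:ℝ)/2) * Real.sqrt (Qf P ρs l)) (Ioi 0) := by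
  apply ContinuousOn.mul
  · apply hμc.div
    · intro l hl
      exact (Real.continuousAt_rpow_const l _ (Or.inl (ne_of_gt hl))).continuousWithinAt
    · intro l hl
      exact (Real.rpow_pos_of_pos hl _).ne'
  · exact Real.continuous_sqrt.comp_continuousOn (Qf_contOn hPc hρs)

end A

lemma pointwise_sq_bound {p vv mu rx : ℝ} (hp : 0 < p) :
    (mu / p ^ ((3:ℝ)/2) * rx) ^ 2
      ≤ 2 * (p⁻¹ * (p * vv + mu * p⁻¹ * rx) ^ 2) + 2 * (p * vv ^ 2) := by
  have hq2 : (p ^ ((3:ℝ)/2)) ^ 2 = p ^ 3 := by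
    rw [← Real.rpow_natCast (p ^ ((3:ℝ)/2)) 2, ← Real.rpow_mul hp.le]
    norm_num
  have hqpos : 0 < p ^ ((3:ℝ)/2) := Real.rpow_pos_of_pos hp _
  have hkey : (mu * rx) ^ 2 ≤ 2 * (p ^ 2 * vv + mu * rx) ^ 2 + 2 * (p ^ 2 * vv) ^ 2 := by
    nlinarith [sq_nonneg (2 * (p ^ 2 * vv) + mu * rx)]
  have e1 : (mu / p ^ ((3:ℝ)/2) * rx) ^ 2 = (mu * rx) ^ 2 / p ^ 3 := by
    rw [← hq2]
    field_simp
  have e2 : p⁻¹ * (p * vv + mu * p⁻¹ * rx) ^ 2 = (p ^ 2 * vv + mu * rx) ^ 2 / p ^ 3 := by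
    field_simp
  have e3 : p * vv ^ 2 = (p ^ 2 * vv) ^ 2 / p ^ 3 := by
    field_simp
  rw [e1, e2, e3]
  have h3 : (0:ℝ) < p ^ 3 := by positivity
  rw [← mul_div_assoc, ← mul_div_assoc, ← add_div, div_le_div_iff₀ h3 h3]
  nlinarith [hkey, h3]

set_option maxHeartbeats 1000000 in
/-- **Estimates (4.4) and (4.5) from the proof of Lemma 1.**  If `V(a,b,ρ,v) ≤ S`
then `|G(ρ(x)) − G(ρ(y))| ≤ (2/√r) S` for all `x, y ∈ [a,b]`, and
`k²(ρ(a)) ≤ 4(1 + r⁻¹) S`. -/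
theorem G_oscillation_and_boundary_k_bounds
    (P μ : ℝ → ℝ) (Pext ρs : ℝ)
    (hP : ContDiffOn ℝ 2 P (Ioi 0)) (hμ : ContDiffOn ℝ 2 μ (Ioi 0))
    (hPpos : ∀ x, 0 < x → 0 < P x) (hμpos : ∀ x, 0 < x → 0 < μ x)
    (hPmono : StrictMonoOn P (Ioi 0))
    (hPrange : P '' Ioi 0 = Ioi 0)
    (hPext : 0 < Pext) (hρs : 0 < ρs) (hPρs : P ρs = Pext)
    (r S : ℝ) (hr : 0 < r) (hS : 0 ≤ S)
    (a b : ℝ) (ρ ρx v : ℝ → ℝ) (hab : a < b)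
    (hρcont : ContinuousOn ρ (Icc a b)) (hρpos : ∀ x ∈ Icc a b, 0 < ρ x)
    (hρH1 : H1On a b ρ ρx)
    (hvcont : ContinuousOn v (Icc a b))
    (hmass : (∫ x in a..b, ρ x) = 1)
    (hV : Vf P μ ρs r a b ρ ρx v ≤ S) :
    (∀ x ∈ Icc a b, ∀ y ∈ Icc a b,
        |Gf P μ ρs (ρ x) - Gf P μ ρs (ρ y)| ≤ 2 / Real.sqrt r * S) ∧
    (kf μ ρs (ρ a)) ^ 2 ≤ 4 * (1 + r⁻¹) * S := by
  obtain ⟨hρx1, hρx2, hρrep⟩ := hρH1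
  have hPc : ContinuousOn P (Ioi 0) := hP.continuousOn
  have hμc : ContinuousOn μ (Ioi 0) := hμ.continuousOn
  have huIcc : uIcc a b = Icc a b := uIcc_of_le hab.le
  have hamem : a ∈ Icc a b := ⟨le_rfl, hab.le⟩
  have hbmem : b ∈ Icc a b := ⟨hab.le, le_rfl⟩
  -- min and max of ρ on [a,b]
  obtain ⟨cm, hcmmem, hcm⟩ := isCompact_Icc.exists_isMinOn (nonempty_Icc.2 hab.le) hρcont
  obtain ⟨cM, hcMmem, hcM⟩ := isCompact_Icc.exists_isMaxOn (nonempty_Icc.2 hab.le) hρcont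
  set m : ℝ := ρ cm with hmdef
  set M : ℝ := ρ cM with hMdef
  have hm0 : 0 < m := hρpos cm hcmmem
  have hmle : ∀ t ∈ Icc a b, m ≤ ρ t := fun t ht => hcm ht
  have hMle : ∀ t ∈ Icc a b, ρ t ≤ M := fun t ht => hcM ht
  -- Q is nonnegative at values of ρ
  have hQ0 : ∀ z : ℝ, 0 < z → 0 ≤ Qf P ρs z := fun z hz =>
    Qf_nonneg' hPc hPmono hρs hz
  -- the integrand of G
  set gbase : ℝ → ℝ := fun l => μ l / l ^ ((3:ℝ)/2) * Real.sqrt (Qf P ρs l) with hgbasedef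
  have hgbase : ContinuousOn gbase (Ioi 0) := gbase_contOn hPc hμc hρs
  set gt : ℝ → ℝ := fun l => gbase (max l (m/2)) with hgtdef
  have hgt : Continuous gt := by
    apply hgbase.comp_continuous (continuous_id.max continuous_const)
    intro l
    exact lt_of_lt_of_le (half_pos hm0) (le_max_right _ _)
  have hgteq : ∀ l : ℝ, m ≤ l → gt l = gbase l := by
    intro l hl
    rw [hgtdef]
    simp only
    rw [max_eq_left (by linarith : m/2 ≤ l)]
  -- energy bookkeeping
  have hVexp : (1 / 2) * (∫ x in a..b, (ρ x)⁻¹ * (ρ x * v x + μ (ρ x) * (ρ x)⁻¹ * ρx x) ^ 2)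
      + (1 / 2) * (v b - kf μ ρs (ρ b)) ^ 2
      + (1 / 2) * (v a + kf μ ρs (ρ a)) ^ 2
      + (∫ x in a..b, Qf P ρs (ρ x))
      + r * ((v a) ^ 2 / 2 + (v b) ^ 2 / 2 + (1 / 2) * (∫ x in a..b, ρ x * (v x) ^ 2)
        + (∫ x in a..b, Qf P ρs (ρ x))) ≤ S := hV
  set A : ℝ → ℝ := fun x => (ρ x)⁻¹ * (ρ x * v x + μ (ρ x) * (ρ x)⁻¹ * ρx x) ^ 2 with hAdef
  set B : ℝ → ℝ := fun x => ρ x * (v x) ^ 2 with hBdef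
  set IA : ℝ := ∫ x in a..b, A x with hIAdef
  set IB : ℝ := ∫ x in a..b, B x with hIBdef
  set IU : ℝ := ∫ x in a..b, Qf P ρs (ρ x) with hIUdef
  have hIA0 : 0 ≤ IA := by
    rw [hIAdef]
    apply intervalIntegral.integral_nonneg hab.le
    intro s hs
    have := hρpos s hs
    rw [hAdef]
    positivity
  have hIB0 : 0 ≤ IB := by
    rw [hIBdef]
    apply intervalIntegral.integral_nonneg hab.le
    intro s hs
    have := hρpos s hs
    rw [hBdef]
    positivity
  have hIU0 : 0 ≤ IU := by
    rw [hIUdef]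
    apply intervalIntegral.integral_nonneg hab.le
    intro s hs
    exact hQ0 _ (hρpos s hs)
  set E' : ℝ := (v a) ^ 2 / 2 + (v b) ^ 2 / 2 + (1 / 2) * IB + IU with hE'def
  have hsqb := sq_nonneg (v b - kf μ ρs (ρ b))
  have hsqa := sq_nonneg (v a + kf μ ρs (ρ a))
  have hva2 := sq_nonneg (v a)
  have hvb2 := sq_nonneg (v b)
  have hE'IU : IU ≤ E' := by rw [hE'def]; linarith
  have hE'0 : 0 ≤ E' := by rw [hE'def]; linarith
  have hrE'0 : 0 ≤ r * E' := mul_nonneg hr.le hE'0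
  have hrIU : r * IU ≤ r * E' := mul_le_mul_of_nonneg_left hE'IU hr.le
  have hrva : r * ((v a) ^ 2 / 2) ≤ r * E' := by
    apply mul_le_mul_of_nonneg_left _ hr.le
    rw [hE'def]; linarith
  have hrIB : r * ((1 / 2) * IB) ≤ r * E' := by
    apply mul_le_mul_of_nonneg_left _ hr.le
    rw [hE'def]; linarith
  have hUb : (1 + r) * IU ≤ S := by nlinarith [hVexp, hrIU, hIA0]
  have hIAb : IA ≤ 2 * S := by nlinarith [hVexp, hrE'0, hIU0, hsqa, hsqb]
  have hvaE : r * (v a) ^ 2 ≤ 2 * S := by linarith [hVexp, hrva, hIA0, hIU0]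
  have hIBb : r * IB ≤ 2 * S := by linarith [hVexp, hrIB, hIA0, hIU0]
  have hkab : (v a + kf μ ρs (ρ a)) ^ 2 ≤ 2 * S := by nlinarith [hVexp, hrE'0, hIA0, hIU0, hsqb]
  constructor
  · -- part (i)
    -- integrability of the relevant functions on [a,b]
    have hρmaps : MapsTo ρ (Icc a b) (Ioi 0) := fun t ht => mem_Ioi.2 (hρpos t ht)
    have hgρcont : ContinuousOn (fun s => gbase (ρ s)) (Icc a b) :=
      hgbase.comp hρcont hρmaps
    have hc1cont : ContinuousOn (fun s => μ (ρ s) / (ρ s) ^ ((3:ℝ)/2)) (Icc a b) := by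
      have : ContinuousOn (fun l => μ l / l ^ ((3:ℝ)/2)) (Ioi 0) := by
        apply hμc.div
        · intro l hl
          exact (Real.continuousAt_rpow_const l _ (Or.inl (ne_of_gt hl))).continuousWithinAt
        · intro l hl
          exact (Real.rpow_pos_of_pos hl _).ne'
      exact this.comp hρcont hρmaps
    have hψcont : ContinuousOn (fun s => Real.sqrt (Qf P ρs (ρ s))) (Icc a b) :=
      (Real.continuous_sqrt.comp_continuousOn (Qf_contOn hPc hρs)).comp hρcont hρmaps
    set φf : ℝ → ℝ := fun s => μ (ρ s) / (ρ s) ^ ((3:ℝ)/2) * ρx s with hφfdef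
    set ψf : ℝ → ℝ := fun s => Real.sqrt (Qf P ρs (ρ s)) with hψfdef
    have hφψint : IntervalIntegrable (fun s => φf s * ψf s) volume a b := by
      have heq : (fun s => φf s * ψf s) = fun s => (gbase (ρ s)) * ρx s := by
        funext s
        rw [hφfdef, hψfdef, hgbasedef]
        simp only
        ring
      rw [heq]
      exact hρx1.continuousOn_mul (by rw [huIcc]; exact hgρcont)
    have hφ2int : IntervalIntegrable (fun s => φf s ^ 2) volume a b := by
      have heq : (fun s => φf s ^ 2)
          = fun s => ((μ (ρ s) / (ρ s) ^ ((3:ℝ)/2)) ^ 2) * (ρx s ^ 2) := by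
        funext s
        rw [hφfdef]
        simp only
        ring
      rw [heq]
      exact hρx2.continuousOn_mul (by rw [huIcc]; exact hc1cont.pow 2)
    have hψ2int : IntervalIntegrable (fun s => ψf s ^ 2) volume a b :=
      ContinuousOn.intervalIntegrable (by rw [huIcc]; exact hψcont.pow 2)
    -- ∫ φf² ≤ 2 IA + 2 IB
    have hAint : IntervalIntegrable A volume a b := by
      set A0 : ℝ → ℝ := fun s => B s + (2 * v s * μ (ρ s) * (ρ s)⁻¹) * ρx s
        + ((μ (ρ s)) ^ 2 * ((ρ s)⁻¹) ^ 3) * (ρx s ^ 2) with hA0def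
      have hμρinv : ContinuousOn (fun s => (ρ s)⁻¹) (Icc a b) :=
        ContinuousOn.inv₀ hρcont (fun t ht => (hρpos t ht).ne')
      have hveccont : ContinuousOn (fun s => 2 * v s * μ (ρ s) * (ρ s)⁻¹) (Icc a b) :=
        (((continuousOn_const.mul hvcont).mul (hμc.comp hρcont hρmaps)).mul hμρinv)
      have hc2cont : ContinuousOn (fun s => (μ (ρ s)) ^ 2 * ((ρ s)⁻¹) ^ 3) (Icc a b) :=
        ((hμc.comp hρcont hρmaps).pow 2).mul (hμρinv.pow 3)
      have hBcont : ContinuousOn B (Icc a b) := hρcont.mul (hvcont.pow 2)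
      have hA0int : IntervalIntegrable A0 volume a b := by
        apply IntervalIntegrable.add
        apply IntervalIntegrable.add
        · exact ContinuousOn.intervalIntegrable (by rw [huIcc]; exact hBcont)
        · exact hρx1.continuousOn_mul (by rw [huIcc]; exact hveccont)
        · exact hρx2.continuousOn_mul (by rw [huIcc]; exact hc2cont)
      rw [intervalIntegrable_iff_integrableOn_Icc_of_le hab.le] at hA0int ⊢
      apply hA0int.congr_fun _ measurableSet_Icc
      intro s hs
      have hp : 0 < ρ s := hρpos s hs
      rw [hA0def, hAdef, hBdef]
      simp only
      field_simp
      ring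
    have hBint : IntervalIntegrable B volume a b :=
      ContinuousOn.intervalIntegrable (by rw [huIcc]; exact hρcont.mul (hvcont.pow 2))
    have hφ2bound : (∫ s in a..b, φf s ^ 2) ≤ 2 * IA + 2 * IB := by
      have hmono := intervalIntegral.integral_mono_on hab.le hφ2int
        ((hAint.const_mul 2).add (hBint.const_mul 2)) (f := fun s => φf s ^ 2)
        (g := fun s => 2 * A s + 2 * B s) ?_
      · rw [intervalIntegral.integral_add (hAint.const_mul 2) (hBint.const_mul 2),
          intervalIntegral.integral_const_mul, intervalIntegral.integral_const_mul] at hmono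
        exact hmono
      · intro s hs
        exact pointwise_sq_bound (hρpos s hs)
    have hψ2eq : (∫ s in a..b, ψf s ^ 2) = IU := by
      apply intervalIntegral.integral_congr
      intro s hs
      rw [huIcc] at hs
      show ψf s ^ 2 = Qf P ρs (ρ s)
      rw [hψfdef]
      simp only
      rw [Real.sq_sqrt (hQ0 _ (hρpos s hs))]
    -- the key estimate for ordered points
    have key : ∀ x' ∈ Icc a b, ∀ y' ∈ Icc a b, y' ≤ x' →
        |Gf P μ ρs (ρ x') - Gf P μ ρs (ρ y')| ≤ 2 / Real.sqrt r * S := by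
      intro x' hx' y' hy' hyx
      have hsubI : uIcc y' x' ⊆ uIcc a b := by
        rw [huIcc, uIcc_of_le hyx]
        exact Icc_subset_Icc hy'.1 hx'.2
      have hgint : ∀ t ∈ Icc a b, IntervalIntegrable gbase volume ρs (ρ t) := by
        intro t ht
        apply ContinuousOn.intervalIntegrable
        apply hgbase.mono
        intro l hl
        have h1 : min ρs (ρ t) ≤ l := by simpa [uIcc] using hl.1
        exact lt_of_lt_of_le (lt_min hρs (hρpos t ht)) h1
      have hGdiff : Gf P μ ρs (ρ x') - Gf P μ ρs (ρ y')
          = ∫ l in (ρ y')..(ρ x'), gbase l := by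
        have : Gf P μ ρs (ρ x') = ∫ l in ρs..(ρ x'), gbase l := rfl
        rw [this]
        have : Gf P μ ρs (ρ y') = ∫ l in ρs..(ρ y'), gbase l := rfl
        rw [this]
        exact intervalIntegral.integral_interval_sub_left (hgint x' hx') (hgint y' hy')
      have h2 : (∫ l in (ρ y')..(ρ x'), gbase l) = ∫ l in (ρ y')..(ρ x'), gt l := by
        apply intervalIntegral.integral_congr
        intro l hl
        have h1 : min (ρ y') (ρ x') ≤ l := by simpa [uIcc] using hl.1
        have hm : m ≤ l := le_trans (le_min (hmle y' hy') (hmle x' hx')) h1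
        exact (hgteq l hm).symm
      have hw' : ∀ t ∈ Icc y' x', ρ t = ρ y' + ∫ s in y'..t, ρx s := by
        intro t ht
        have htmem : t ∈ Icc a b := ⟨hy'.1.trans ht.1, ht.2.trans hx'.2⟩
        have e1 := hρrep t htmem
        have e2 := hρrep y' hy'
        have hsub1 : uIcc a t ⊆ uIcc a b := by
          rw [huIcc, uIcc_of_le htmem.1]
          exact Icc_subset_Icc le_rfl htmem.2
        have hsub2 : uIcc a y' ⊆ uIcc a b := by
          rw [huIcc, uIcc_of_le hy'.1]
          exact Icc_subset_Icc le_rfl hy'.2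
        have e3 : (∫ s in a..t, ρx s) - (∫ s in a..y', ρx s) = ∫ s in y'..t, ρx s :=
          intervalIntegral.integral_interval_sub_left (hρx1.mono_set hsub1)
            (hρx1.mono_set hsub2)
        rw [e1, e2]
        linarith [e3]
      have h3 : (∫ l in (ρ y')..(ρ x'), gt l) = ∫ s in y'..x', gt (ρ s) * ρx s :=
        comp_primitive hgt hyx (hρx1.mono_set hsubI) hw'
      have h4 : (∫ s in y'..x', gt (ρ s) * ρx s) = ∫ s in y'..x', φf s * ψf s := by
        apply intervalIntegral.integral_congr
        intro s hs
        rw [uIcc_of_le hyx] at hs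
        have hsmem : s ∈ Icc a b := ⟨hy'.1.trans hs.1, hs.2.trans hx'.2⟩
        show gt (ρ s) * ρx s = φf s * ψf s
        rw [hgteq (ρ s) (hmle s hsmem), hgbasedef, hφfdef, hψfdef]
        simp only
        ring
      have hcs := cs_interval hyx (hφψint.mono_set hsubI) (hφ2int.mono_set hsubI)
        (hψ2int.mono_set hsubI)
      have hφyx : (∫ s in y'..x', φf s ^ 2) ≤ ∫ s in a..b, φf s ^ 2 :=
        intervalIntegral.integral_mono_interval hy'.1 hyx hx'.2
          (Eventually.of_forall fun s => sq_nonneg _) hφ2int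
      have hψyx : (∫ s in y'..x', ψf s ^ 2) ≤ ∫ s in a..b, ψf s ^ 2 :=
        intervalIntegral.integral_mono_interval hy'.1 hyx hx'.2
          (Eventually.of_forall fun s => sq_nonneg _) hψ2int
      have hφyx0 : 0 ≤ ∫ s in y'..x', φf s ^ 2 :=
        intervalIntegral.integral_nonneg hyx (fun s _ => sq_nonneg _)
      have hψyx0 : 0 ≤ ∫ s in y'..x', ψf s ^ 2 :=
        intervalIntegral.integral_nonneg hyx (fun s _ => sq_nonneg _)
      have hφab0 : 0 ≤ ∫ s in a..b, φf s ^ 2 :=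
        intervalIntegral.integral_nonneg hab.le (fun s _ => sq_nonneg _)
      have hIBble : IB ≤ 2 * S / r := by
        rw [le_div_iff₀ hr]; linarith [hIBb]
      have hIUble : IU ≤ S / (1 + r) := by
        rw [le_div_iff₀ (by linarith : (0:ℝ) < 1 + r)]; linarith [hUb]
      have h2ab : 2 * IA + 2 * IB ≤ 4 * S + 4 * S / r := by
        have : 2 * IB ≤ 2 * (2 * S / r) := by linarith [hIBble]
        have h4' : 2 * (2 * S / r) = 4 * S / r := by ring
        linarith [hIAb]
      have hprod : (Gf P μ ρs (ρ x') - Gf P μ ρs (ρ y')) ^ 2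
          ≤ (4 * S + 4 * S / r) * (S / (1 + r)) := by
        rw [hGdiff, h2, h3, h4]
        calc (∫ s in y'..x', φf s * ψf s) ^ 2
            ≤ (∫ s in y'..x', φf s ^ 2) * (∫ s in y'..x', ψf s ^ 2) := hcs
          _ ≤ (∫ s in a..b, φf s ^ 2) * (∫ s in a..b, ψf s ^ 2) :=
              mul_le_mul hφyx hψyx hψyx0 hφab0
          _ = (∫ s in a..b, φf s ^ 2) * IU := by rw [hψ2eq]
          _ ≤ (2 * IA + 2 * IB) * IU := by
              apply mul_le_mul_of_nonneg_right hφ2bound hIU0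
          _ ≤ (4 * S + 4 * S / r) * (S / (1 + r)) := by
              apply mul_le_mul h2ab hIUble hIU0
              have : 0 ≤ 4 * S / r := by positivity
              linarith [hS]
      have hfsr : (4 * S + 4 * S / r) * (S / (1 + r)) = 4 * S ^ 2 / r := by
        field_simp
        ring
      rw [hfsr] at hprod
      have hsr : (0:ℝ) < Real.sqrt r := Real.sqrt_pos.2 hr
      have htarget0 : 0 ≤ 2 / Real.sqrt r * S := by positivity
      have hsqt : (2 / Real.sqrt r * S) ^ 2 = 4 * S ^ 2 / r := by
        rw [mul_pow, div_pow, Real.sq_sqrt hr.le]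
        ring
      calc |Gf P μ ρs (ρ x') - Gf P μ ρs (ρ y')|
          = Real.sqrt ((Gf P μ ρs (ρ x') - Gf P μ ρs (ρ y')) ^ 2) :=
            (Real.sqrt_sq_eq_abs _).symm
        _ ≤ Real.sqrt ((2 / Real.sqrt r * S) ^ 2) := by
            apply Real.sqrt_le_sqrt
            rw [hsqt]
            exact hprod
        _ = 2 / Real.sqrt r * S := Real.sqrt_sq htarget0
    intro x hx y hy
    rcases le_total y x with h | h
    · exact key x hx y hy h
    · rw [abs_sub_comm]
      exact key y hy x hx h
  · -- part (ii)
    set ka : ℝ := kf μ ρs (ρ a) with hkadef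
    have h1 : ka ^ 2 ≤ 2 * (v a + ka) ^ 2 + 2 * (v a) ^ 2 := by
      nlinarith [sq_nonneg (2 * v a + ka)]
    have h2 : (v a) ^ 2 ≤ 2 * S / r := by
      rw [le_div_iff₀ hr]; linarith [hvaE]
    have h3 : 4 * (1 + r⁻¹) * S = 4 * S + 4 * (S / r) := by
      field_simp
    rw [h3]
    have h4 : 2 * (2 * S / r) = 4 * (S / r) := by ring
    linarith [hkab, h1, h2]
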